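/- For every integer n ≥ 1, t({2}_n) = π^{2n} / (2^{2n} (2n)!). -/

import Mathlib

open Filter Finset Real Topology

/-- Multiple t-value: `t(a 0, ..., a (k-1))` is the sum of
`1/(n_0^(a 0) ... n_(k-1)^(a (k-1)))` over strictly decreasing tuples of odd
positive integers. -/
noncomputable def multT {k : ℕ} (a : Fin k → ℕ) : ℝ :=
  ∑' n : {f : Fin k → ℕ // StrictAnti f ∧ ∀ i, Odd (f i)},
    ∏ i, 1 / ((n.1 i : ℝ) ^ (a i))

namespace MultTAux


noncomputable def x (k : ℕ) : ℝ := 1 / (2 * (k : ℝ) + 1) ^ 2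

lemma x_nonneg (k : ℕ) : 0 ≤ x k := by unfold x; positivity

lemma summable_x : Summable x := by
  have h2 : Summable (fun n : ℕ => 1 / (n : ℝ) ^ 2) :=
    Real.summable_one_div_nat_pow.mpr one_lt_two
  have h3 : Summable (fun k : ℕ => 1 / ((k : ℝ) + 1) ^ 2) := by
    have := h2.comp_injective Nat.succ_injective
    refine this.congr fun k => ?_
    simp [Function.comp, Nat.succ_eq_add_one]
  refine Summable.of_nonneg_of_le x_nonneg (fun k => ?_) h3
  unfold x
  have hk : (0:ℝ) ≤ (k:ℝ) := Nat.cast_nonneg k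
  gcongr
  all_goals linarith

noncomputable def E (n : ℕ) : ℝ := ∑' A : {A : Finset ℕ // A.card = n}, ∏ i ∈ A.1, x i

lemma prod_eq_powerset_sum (c : ℝ) (N : ℕ) :
    ∏ k ∈ range N, (c * x k + 1) = ∑ A ∈ (range N).powerset, ∏ i ∈ A, (c * x i) := by
  rw [Finset.prod_add]
  simp

lemma summable_weight_nonneg (c : ℝ) (hc : 0 ≤ c) :
    Summable (fun A : Finset ℕ => ∏ i ∈ A, (c * x i)) := by
  have hnn : ∀ A : Finset ℕ, 0 ≤ ∏ i ∈ A, (c * x i) := fun A =>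
    Finset.prod_nonneg fun i _ => mul_nonneg hc (x_nonneg i)
  refine summable_of_sum_le (c := Real.exp (c * ∑' k, x k)) hnn (fun u => ?_)
  set N := (u.sup fun A => A.sup id) + 1 with hN
  have hsub : u ⊆ (range N).powerset := by
    intro A hA
    rw [Finset.mem_powerset]
    intro a ha
    rw [Finset.mem_range]
    calc a = id a := rfl
    _ ≤ A.sup id := Finset.le_sup ha
    _ ≤ u.sup fun A => A.sup id := Finset.le_sup hA
    _ < N := Nat.lt_succ_self _
  calc ∑ A ∈ u, ∏ i ∈ A, (c * x i)
      ≤ ∑ A ∈ (range N).powerset, ∏ i ∈ A, (c * x i) :=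
        Finset.sum_le_sum_of_subset_of_nonneg hsub (fun A _ _ => hnn A)
    _ = ∏ k ∈ range N, (c * x k + 1) := (prod_eq_powerset_sum c N).symm
    _ ≤ ∏ k ∈ range N, Real.exp (c * x k) := by
        refine Finset.prod_le_prod (fun k _ => by nlinarith [x_nonneg k]) (fun k _ => ?_)
        have := Real.add_one_le_exp (c * x k)
        linarith
    _ = Real.exp (∑ k ∈ range N, c * x k) := by rw [Real.exp_sum]
    _ ≤ Real.exp (c * ∑' k, x k) := by
        apply Real.exp_le_exp.mpr
        rw [← Finset.mul_sum]
        exact mul_le_mul_of_nonneg_left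
          (summable_x.sum_le_tsum _ (fun k _ => x_nonneg k)) hc

lemma summable_weight (c : ℝ) :
    Summable (fun A : Finset ℕ => ∏ i ∈ A, (c * x i)) := by
  refine Summable.of_abs ?_
  have : (fun A : Finset ℕ => |∏ i ∈ A, (c * x i)|)
      = fun A : Finset ℕ => ∏ i ∈ A, (|c| * x i) := by
    funext A
    rw [Finset.abs_prod]
    exact Finset.prod_congr rfl fun i _ => by rw [abs_mul, abs_of_nonneg (x_nonneg i)]
  rw [this]
  exact summable_weight_nonneg _ (abs_nonneg c)

lemma tendsto_powerset_sum {v : Finset ℕ → ℝ} (hv : Summable v) :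
    Tendsto (fun N => ∑ A ∈ (range N).powerset, v A) atTop (𝓝 (∑' A, v A)) := by
  refine hv.hasSum.comp (Filter.tendsto_atTop_finset_of_monotone ?_ ?_)
  · intro a b hab
    exact Finset.powerset_mono.mpr (Finset.range_subset_range.mpr hab)
  · intro A
    refine ⟨(A.sup id) + 1, Finset.mem_powerset.mpr fun a ha => Finset.mem_range.mpr ?_⟩
    exact Nat.lt_succ_of_le (Finset.le_sup (f := id) ha)


lemma E_nonneg (n : ℕ) : 0 ≤ E n :=
  tsum_nonneg fun A => Finset.prod_nonneg fun i _ => x_nonneg i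

lemma summable_sigma_weight (c : ℝ) :
    Summable (fun p : Σ n : ℕ, {A : Finset ℕ // A.card = n} => ∏ i ∈ p.2.1, (c * x i)) :=
  (Equiv.sigmaFiberEquiv (Finset.card : Finset ℕ → ℕ)).summable_iff.mpr (summable_weight c)

lemma inner_tsum (c : ℝ) (n : ℕ) :
    ∑' A : {A : Finset ℕ // A.card = n}, ∏ i ∈ A.1, (c * x i) = c ^ n * E n := by
  rw [E, ← tsum_mul_left]
  refine tsum_congr fun A => ?_
  rw [Finset.prod_mul_distrib, Finset.prod_const, A.2]

lemma tsum_weight (c : ℝ) :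
    ∑' A : Finset ℕ, ∏ i ∈ A, (c * x i) = ∑' n, c ^ n * E n := by
  have h1 : ∑' A : Finset ℕ, ∏ i ∈ A, (c * x i)
      = ∑' p : Σ n : ℕ, {A : Finset ℕ // A.card = n}, ∏ i ∈ p.2.1, (c * x i) :=
    ((Equiv.sigmaFiberEquiv (Finset.card : Finset ℕ → ℕ)).tsum_eq
      (fun A : Finset ℕ => ∏ i ∈ A, (c * x i))).symm
  rw [h1, (summable_sigma_weight c).tsum_sigma]
  exact tsum_congr fun n => inner_tsum c n

lemma summable_powE (c : ℝ) : Summable (fun n => c ^ n * E n) := by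
  have := (summable_sigma_weight c).sigma
  refine this.congr fun n => ?_
  exact inner_tsum c n

lemma tendsto_prod (c : ℝ) :
    Tendsto (fun N => ∏ k ∈ range N, (c * x k + 1)) atTop (𝓝 (∑' n, c ^ n * E n)) := by
  rw [← tsum_weight]
  exact (tendsto_congr fun N => prod_eq_powerset_sum c N).mpr
    (tendsto_powerset_sum (summable_weight c))


lemma prod_split (u : ℝ) (N : ℕ) :
    ∏ j ∈ range (2 * N), (1 - u ^ 2 / ((j : ℝ) + 1) ^ 2)
      = (∏ k ∈ range N, (1 - u ^ 2 / (2 * (k : ℝ) + 1) ^ 2))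
        * ∏ k ∈ range N, (1 - (u / 2) ^ 2 / ((k : ℝ) + 1) ^ 2) := by
  induction N with
  | zero => simp
  | succ N ih =>
    have h2 : 2 * (N + 1) = (2 * N) + 1 + 1 := by ring
    rw [h2, Finset.prod_range_succ, Finset.prod_range_succ, ih,
      Finset.prod_range_succ, Finset.prod_range_succ]
    have hN1 : ((N : ℝ) + 1) ≠ 0 := by positivity
    have hfac : 1 - (u / 2) ^ 2 / ((N : ℝ) + 1) ^ 2
        = 1 - u ^ 2 / (((2 * N : ℕ) : ℝ) + 1 + 1) ^ 2 := by
      push_cast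
      rw [show (2 * (N : ℝ) + 1 + 1) ^ 2 = 4 * ((N : ℝ) + 1) ^ 2 by ring]
      rw [show (u / 2) ^ 2 = u ^ 2 / 4 by ring]
      rw [div_div]
    rw [hfac]
    push_cast
    ring

lemma tendsto_cos_prod (u : ℝ) (h0 : 0 < u) (h1 : u < 1) :
    Tendsto (fun N => ∏ k ∈ range N, (1 - u ^ 2 * x k)) atTop
      (𝓝 (Real.cos (Real.pi * u / 2))) := by
  have hπ := Real.pi_pos
  set P : ℕ → ℝ := fun M => ∏ j ∈ range M, (1 - u ^ 2 / ((j : ℝ) + 1) ^ 2) with hP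
  set Q : ℕ → ℝ := fun N => ∏ k ∈ range N, (1 - (u / 2) ^ 2 / ((k : ℝ) + 1) ^ 2) with hQ
  set A : ℕ → ℝ := fun N => ∏ k ∈ range N, (1 - u ^ 2 / (2 * (k : ℝ) + 1) ^ 2) with hA
  have hsplit : ∀ N, P (2 * N) = A N * Q N := prod_split u
  have hQpos : ∀ N, 0 < Q N := by
    intro N
    refine Finset.prod_pos fun k _ => ?_
    have hk : (0:ℝ) ≤ (k : ℝ) := Nat.cast_nonneg k
    have h2 : (u / 2) ^ 2 < ((k : ℝ) + 1) ^ 2 := by nlinarith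
    have h3 : (u / 2) ^ 2 / ((k : ℝ) + 1) ^ 2 < 1 := (div_lt_one (by positivity)).mpr h2
    linarith
  have htwo : Tendsto (fun N : ℕ => 2 * N) atTop atTop :=
    tendsto_atTop_mono (fun n => by simp; omega) tendsto_id
  have hsin1 : Tendsto (fun N => Real.pi * u * P (2 * N)) atTop
      (𝓝 (Real.sin (Real.pi * u))) := (Real.tendsto_euler_sin_prod u).comp htwo
  have hsin2 : Tendsto (fun N => Real.pi * (u / 2) * Q N) atTop
      (𝓝 (Real.sin (Real.pi * (u / 2)))) := Real.tendsto_euler_sin_prod (u / 2)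
  have hs2pos : 0 < Real.sin (Real.pi * (u / 2)) := by
    apply Real.sin_pos_of_pos_of_lt_pi <;> nlinarith
  have hkey : Tendsto (fun N => (Real.pi * u * P (2 * N)) / (2 * (Real.pi * (u / 2) * Q N)))
      atTop (𝓝 (Real.sin (Real.pi * u) / (2 * Real.sin (Real.pi * (u / 2))))) :=
    hsin1.div (hsin2.const_mul 2) (by positivity)
  have hAeq : ∀ N, A N = (Real.pi * u * P (2 * N)) / (2 * (Real.pi * (u / 2) * Q N)) := by
    intro N
    rw [hsplit N]
    have hq := (hQpos N).ne'
    field_simp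
  have hlim : Real.sin (Real.pi * u) / (2 * Real.sin (Real.pi * (u / 2)))
      = Real.cos (Real.pi * u / 2) := by
    rw [show Real.pi * u / 2 = Real.pi * (u / 2) by ring]
    rw [show Real.pi * u = 2 * (Real.pi * (u / 2)) by ring, Real.sin_two_mul]
    rw [mul_assoc]
    have h2s : (2 * Real.sin (Real.pi * (u / 2))) ≠ 0 := by positivity
    rw [← mul_assoc]
    exact mul_div_cancel_left₀ _ h2s
  have hAlim : Tendsto A atTop (𝓝 (Real.cos (Real.pi * u / 2))) := by
    rw [← hlim]
    exact (tendsto_congr hAeq).mpr hkey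
  refine (tendsto_congr fun N => ?_).mpr hAlim
  refine Finset.prod_congr rfl fun k _ => ?_
  rw [x]
  ring


lemma summable_coeff_pow {c : ℕ → ℝ} (hc : Summable fun n => |c n|) {s : ℝ}
    (h0 : 0 ≤ s) (h1 : s ≤ 1) : Summable fun n => c n * s ^ n := by
  refine Summable.of_abs (Summable.of_nonneg_of_le (fun n => abs_nonneg _) (fun n => ?_) hc)
  rw [abs_mul, abs_pow, abs_of_nonneg h0]
  have hpow : s ^ n ≤ 1 := pow_le_one₀ h0 h1
  nlinarith [abs_nonneg (c n), pow_nonneg h0 n]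

lemma tsum_coeff_bound {c : ℕ → ℝ} (hc : Summable fun n => |c n|) {s : ℝ}
    (h0 : 0 ≤ s) (h1 : s ≤ 1) : |∑' n, c n * s ^ n| ≤ ∑' n, |c n| := by
  have hsum := summable_coeff_pow hc h0 h1
  have habs : Summable fun n => |c n * s ^ n| := hsum.abs
  calc |∑' n, c n * s ^ n| ≤ ∑' n, |c n * s ^ n| := by
        have hn : Summable fun n : ℕ => ‖c n * s ^ n‖ := habs
        exact norm_tsum_le_tsum_norm (f := fun n : ℕ => c n * s ^ n) hn
    _ ≤ ∑' n, |c n| := by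
        refine habs.tsum_le_tsum (fun n => ?_) hc
        rw [abs_mul, abs_pow, abs_of_nonneg h0]
        have hpow : s ^ n ≤ 1 := pow_le_one₀ h0 h1
        nlinarith [abs_nonneg (c n), pow_nonneg h0 n]

lemma tsum_shift {c : ℕ → ℝ} (hc : Summable fun n => |c n|) {s : ℝ}
    (h0 : 0 ≤ s) (h1 : s ≤ 1) :
    ∑' n, c n * s ^ n = c 0 + s * ∑' n, c (n + 1) * s ^ n := by
  rw [(summable_coeff_pow hc h0 h1).tsum_eq_zero_add]
  rw [pow_zero, mul_one, ← tsum_mul_left]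
  congr 1
  exact tsum_congr fun n => by ring

lemma coeff_zero (c : ℕ → ℝ) (hc : Summable fun n => |c n|)
    (h : ∀ s ∈ Set.Ioo (0:ℝ) 1, ∑' n, c n * s ^ n = 0) : c 0 = 0 := by
  by_contra h0
  have hc1 : Summable fun n => |c (n + 1)| := hc.comp_injective Nat.succ_injective
  set T := ∑' n, |c (n + 1)| with hT
  have hTnn : 0 ≤ T := tsum_nonneg fun n => abs_nonneg _
  have habs : 0 < |c 0| := abs_pos.mpr h0
  set s := min (1/2) (|c 0| / (2 * T + 2)) with hs
  have hspos : 0 < s := lt_min (by norm_num) (by positivity)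
  have hslt1 : s < 1 := lt_of_le_of_lt (min_le_left _ _) (by norm_num)
  have h2 := h s ⟨hspos, hslt1⟩
  rw [tsum_shift hc hspos.le hslt1.le] at h2
  have hbound : |∑' n, c (n + 1) * s ^ n| ≤ T := tsum_coeff_bound hc1 hspos.le hslt1.le
  have hc0le : |c 0| ≤ s * T := by
    have : c 0 = -(s * ∑' n, c (n + 1) * s ^ n) := by linarith
    rw [this, abs_neg, abs_mul, abs_of_nonneg hspos.le]
    exact mul_le_mul_of_nonneg_left hbound hspos.le
  have hs2 : s * (2 * T + 2) ≤ |c 0| := by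
    have hle : s ≤ |c 0| / (2 * T + 2) := min_le_right _ _
    rw [le_div_iff₀ (by positivity)] at hle
    exact hle
  nlinarith

lemma coeff_eq_zero : ∀ (n : ℕ) (c : ℕ → ℝ), (Summable fun n => |c n|) →
    (∀ s ∈ Set.Ioo (0:ℝ) 1, ∑' n, c n * s ^ n = 0) → c n = 0 := by
  intro n
  induction n with
  | zero => exact fun c hc h => coeff_zero c hc h
  | succ n ih =>
    intro c hc h
    refine ih (fun m => c (m + 1)) (hc.comp_injective Nat.succ_injective) ?_
    intro s hs
    have h0 : c 0 = 0 := coeff_zero c hc h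
    have h2 := h s hs
    rw [tsum_shift hc hs.1.le hs.2.le, h0, zero_add] at h2
    exact (mul_eq_zero.mp h2).resolve_left (ne_of_gt hs.1)




noncomputable def b (n : ℕ) : ℝ := (Real.pi / 2) ^ (2 * n) / (2 * n).factorial

lemma b_nonneg (n : ℕ) : 0 ≤ b n := by unfold b; positivity

lemma summable_b : Summable b := by
  have := (Real.summable_pow_div_factorial (Real.pi / 2)).comp_injective
    (i := fun n : ℕ => 2 * n) (fun a b h => by simp at h; omega)
  exact this.congr fun n => rfl

lemma summable_E : Summable E := by
  have := summable_powE 1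
  exact this.congr fun n => by rw [one_pow, one_mul]

lemma E_eq (n : ℕ) : E n = b n := by
  have hc : Summable fun n => |(-1:ℝ) ^ n * (E n - b n)| := by
    refine Summable.of_nonneg_of_le (fun n => abs_nonneg _) (fun n => ?_)
      (summable_E.add summable_b)
    rw [abs_mul, abs_pow, abs_neg, abs_one, one_pow, one_mul]
    have h1 : |E n - b n| ≤ |E n| + |b n| := abs_sub _ _
    rw [abs_of_nonneg (E_nonneg n), abs_of_nonneg (b_nonneg n)] at h1
    exact h1
  have hzero : ∀ s ∈ Set.Ioo (0:ℝ) 1, ∑' m, ((-1:ℝ) ^ m * (E m - b m)) * s ^ m = 0 := by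
    intro s hs
    set u := Real.sqrt s with hu
    have hu0 : 0 < u := Real.sqrt_pos.mpr hs.1
    have hu2 : u ^ 2 = s := Real.sq_sqrt hs.1.le
    have hu1 : u < 1 := by nlinarith [hs.2]
    have hπu : 0 < Real.pi * u / 2 := by positivity
    have hA := tendsto_cos_prod u hu0 hu1
    have hB := tendsto_prod (-(u ^ 2))
    have hfn : (fun N => ∏ k ∈ range N, (-(u ^ 2) * x k + 1))
        = fun N => ∏ k ∈ range N, (1 - u ^ 2 * x k) :=
      funext fun N => Finset.prod_congr rfl fun k _ => by ring
    rw [hfn] at hB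
    have hcos : (∑' m, (-(u ^ 2)) ^ m * E m) = Real.cos (Real.pi * u / 2) :=
      tendsto_nhds_unique hB hA
    have hcos2 : Real.cos (Real.pi * u / 2)
        = ∑' m, (-1:ℝ) ^ m * (Real.pi * u / 2) ^ (2 * m) / (2 * m).factorial :=
      Real.cos_eq_tsum _
    have S1 : Summable fun m => (-(u ^ 2)) ^ m * E m := summable_powE _
    have hcomp : Summable fun m : ℕ => (Real.pi * u / 2) ^ (2 * m) / ((2 * m).factorial : ℝ) := by
      have := (Real.summable_pow_div_factorial (Real.pi * u / 2)).comp_injective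
        (i := fun n : ℕ => 2 * n) (fun a b h => by simp at h; omega)
      exact this.congr fun m => rfl
    have S2 : Summable fun m : ℕ =>
        (-1:ℝ) ^ m * (Real.pi * u / 2) ^ (2 * m) / ((2 * m).factorial : ℝ) := by
      refine Summable.of_abs (hcomp.congr fun m => ?_)
      rw [abs_div, abs_mul, abs_pow, abs_pow, abs_neg, abs_one, one_pow, one_mul,
        abs_of_nonneg hπu.le, abs_of_nonneg (Nat.cast_nonneg _)]
    calc ∑' m, ((-1:ℝ) ^ m * (E m - b m)) * s ^ m
        = ∑' m, ((-(u ^ 2)) ^ m * E m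
            - (-1:ℝ) ^ m * (Real.pi * u / 2) ^ (2 * m) / ((2 * m).factorial : ℝ)) := by
          refine tsum_congr fun m => ?_
          rw [← hu2]
          unfold b
          rw [show Real.pi * u / 2 = Real.pi / 2 * u by ring, mul_pow, pow_mul u 2 m,
            neg_pow (u ^ 2) m]
          ring
      _ = (∑' m, (-(u ^ 2)) ^ m * E m)
            - ∑' m, (-1:ℝ) ^ m * (Real.pi * u / 2) ^ (2 * m) / ((2 * m).factorial : ℝ) :=
          S1.tsum_sub S2
      _ = 0 := by rw [hcos, hcos2, sub_self]
  have h := coeff_eq_zero n _ hc hzero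
  have hne : ((-1:ℝ)) ^ n ≠ 0 := pow_ne_zero _ (by norm_num)
  have := mul_eq_zero.mp h
  rcases this with h1 | h2
  · exact absurd h1 hne
  · linarith [sub_eq_zero.mp h2]



noncomputable def Phi (n : ℕ) (A : {A : Finset ℕ // A.card = n}) :
    {f : Fin n → ℕ // StrictAnti f ∧ ∀ i, Odd (f i)} :=
  ⟨fun i => 2 * (A.1.orderEmbOfFin A.2 i.rev) + 1, by
    constructor
    · intro i j hij
      have h1 : j.rev < i.rev := Fin.rev_lt_rev.mpr hij
      have h2 := (A.1.orderEmbOfFin A.2).strictMono h1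
      show 2 * (A.1.orderEmbOfFin A.2 j.rev) + 1 < 2 * (A.1.orderEmbOfFin A.2 i.rev) + 1
      omega
    · intro i
      exact ⟨A.1.orderEmbOfFin A.2 i.rev, by ring⟩⟩

lemma Phi_bijective (n : ℕ) : Function.Bijective (Phi n) := by
  constructor
  · intro A B h
    have hfun := congrArg Subtype.val h
    have h2 : ∀ j : Fin n, A.1.orderEmbOfFin A.2 j = B.1.orderEmbOfFin B.2 j := by
      intro j
      have := congrFun hfun j.rev
      simp only [Phi, Fin.rev_rev] at this
      omega
    have h3 : Set.range (A.1.orderEmbOfFin A.2) = Set.range (B.1.orderEmbOfFin B.2) := by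
      rw [funext h2]
    rw [Finset.range_orderEmbOfFin, Finset.range_orderEmbOfFin] at h3
    exact Subtype.ext (Finset.coe_inj.mp h3)
  · rintro ⟨f, hanti, hodd⟩
    set g : Fin n → ℕ := fun j => f j.rev / 2 with hg
    have hkey : ∀ j : Fin n, 2 * g j + 1 = f j.rev := by
      intro j
      obtain ⟨k, hk⟩ := hodd j.rev
      simp only [hg]
      omega
    have hgmono : StrictMono g := by
      intro j j' hjj
      have h1 : j'.rev < j.rev := Fin.rev_lt_rev.mpr hjj
      have h2 : f j.rev < f j'.rev := hanti h1
      have h3 := hkey j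
      have h4 := hkey j'
      omega
    set A : Finset ℕ := Finset.image g Finset.univ with hA
    have hcard : A.card = n := by
      rw [hA, Finset.card_image_of_injective _ hgmono.injective, Finset.card_univ,
        Fintype.card_fin]
    have hemb : g = A.orderEmbOfFin hcard := by
      refine Finset.orderEmbOfFin_unique hcard (fun x => ?_) hgmono
      exact Finset.mem_image_of_mem g (Finset.mem_univ x)
    refine ⟨⟨A, hcard⟩, ?_⟩
    refine Subtype.ext ?_
    funext i
    show 2 * (A.orderEmbOfFin hcard i.rev) + 1 = f i
    rw [← hemb]
    rw [hkey i.rev, Fin.rev_rev]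

lemma multT_eq_E (n : ℕ) : multT (fun _ : Fin n => 2) = E n := by
  rw [multT, E]
  rw [← Equiv.tsum_eq (Equiv.ofBijective (Phi n) (Phi_bijective n))]
  refine tsum_congr fun A => ?_
  have hterm : ∀ i : Fin n,
      (1 : ℝ) / (((Phi n A).1 i : ℝ) ^ 2) = x (A.1.orderEmbOfFin A.2 i.rev) := by
    intro i
    show (1 : ℝ) / (((2 * (A.1.orderEmbOfFin A.2 i.rev) + 1 : ℕ) : ℝ) ^ 2) = _
    rw [x]
    push_cast
    ring_nf
  calc (∏ i : Fin n, 1 / (((Phi n A).1 i : ℝ) ^ 2))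
      = ∏ i : Fin n, x (A.1.orderEmbOfFin A.2 i.rev) := Finset.prod_congr rfl fun i _ => hterm i
    _ = ∏ i : Fin n, x (A.1.orderEmbOfFin A.2 i) :=
        Equiv.prod_comp Fin.revPerm (fun j => x (A.1.orderEmbOfFin A.2 j))
    _ = ∏ a ∈ A.1, x a := by
        rw [← Finset.prod_coe_sort A.1 x]
        exact Fintype.prod_equiv (A.1.orderIsoOfFin A.2).toEquiv _ _
          (fun i => by rw [← Finset.coe_orderIsoOfFin_apply]; rfl)

end MultTAux

/-- `t({2}_n) = π^(2n) / (2^(2n) (2n)!)`. -/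
theorem multT_repeat_two (n : ℕ) (hn : 1 ≤ n) :
    multT (fun _ : Fin n => 2) =
      Real.pi ^ (2 * n) / (2 ^ (2 * n) * Nat.factorial (2 * n)) := by
  rw [MultTAux.multT_eq_E n, MultTAux.E_eq n, MultTAux.b, div_pow]
  rw [div_div]
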